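/- Suppose there is d < ∞ with f''_n(1) ≤ d·(f'_n(1) + f'_n(1)²) a.s. for all n. Let S_n = Σ_{i=1}^n log f'_i(1) and L_n = min_{0≤k≤n} S_k. Then almost surely E[Z_n(Z_n - 1) | environment, Z_0 = 1] = f''_{0,n}(1) ≤ 2d·(n+1)·e^{S_n}·e^{S_n - L_n}. -/

import Mathlib

open MeasureTheory

/-- The `k`-fold convolution of an offspring distribution `q`: the law of the
sum of `k` i.i.d. individuals' offspring numbers. -/
noncomputable def convPow (q : PMF ℕ) : ℕ → PMF ℕ
  | 0 => PMF.pure 0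
  | k + 1 => (convPow q k).bind fun s => q.map fun x => x + s

/-- The quenched law of the branching process in the (fixed) environment
`env : ℕ → PMF ℕ`, started from `z` individuals: `bpre env z n` is the law of
`Z_n` given the environment and `Z_0 = z`. -/
noncomputable def bpre (env : ℕ → PMF ℕ) (z : ℕ) : ℕ → PMF ℕ
  | 0 => PMF.pure z
  | n + 1 => (bpre env z n).bind fun k => convPow (env n) k

/-- The mean number of offspring of an offspring distribution `q`. -/
noncomputable def pmfMean (q : PMF ℕ) : ℝ :=
  ∑' j : ℕ, (j : ℝ) * (q j).toReal

/-- The random walk associated with the environment: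
`S_n = ∑_{i<n} log f_i'(1)`. -/
noncomputable def Swalk (env : ℕ → PMF ℕ) (n : ℕ) : ℝ :=
  ∑ i ∈ Finset.range n, Real.log (pmfMean (env i))

/-- The running minimum `L_n = min_{0 ≤ k ≤ n} S_k` of the associated walk. -/
noncomputable def Lmin (env : ℕ → PMF ℕ) (n : ℕ) : ℝ :=
  (Finset.range (n + 1)).inf' Finset.nonempty_range_add_one (Swalk env)

open ENNReal


noncomputable def M1 (p : PMF ℕ) : ℝ≥0∞ := ∑' j : ℕ, (j : ℝ≥0∞) * p j
noncomputable def M2 (p : PMF ℕ) : ℝ≥0∞ := ∑' j : ℕ, ((j * (j-1) : ℕ) : ℝ≥0∞) * p j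

lemma tsum_pmf_pure (g : ℕ → ℝ≥0∞) (c : ℕ) : ∑' b, g b * (PMF.pure c) b = g c := by
  rw [tsum_eq_single c]
  · simp [PMF.pure_apply]
  · intro b hb; simp [PMF.pure_apply, hb]

lemma tsum_pmf_bind (p : PMF ℕ) (f : ℕ → PMF ℕ) (g : ℕ → ℝ≥0∞) :
    ∑' b, g b * (p.bind f) b = ∑' a, p a * ∑' b, g b * (f a) b := by
  simp only [PMF.bind_apply]
  calc ∑' b, g b * ∑' a, p a * f a b
      = ∑' b, ∑' a, g b * (p a * f a b) := by
        refine tsum_congr fun b => ?_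
        rw [ENNReal.tsum_mul_left]
    _ = ∑' a, ∑' b, g b * (p a * f a b) := ENNReal.tsum_comm
    _ = ∑' a, ∑' b, p a * (g b * f a b) :=
        tsum_congr fun a => tsum_congr fun b => by ring
    _ = ∑' a, p a * ∑' b, g b * f a b := tsum_congr fun a => ENNReal.tsum_mul_left

lemma tsum_pmf_map (q : PMF ℕ) (h : ℕ → ℕ) (g : ℕ → ℝ≥0∞) :
    ∑' b, g b * (q.map h) b = ∑' a, g (h a) * q a := by
  rw [show q.map h = q.bind (fun a => PMF.pure (h a)) from rfl, tsum_pmf_bind]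
  refine tsum_congr fun a => ?_
  rw [tsum_pmf_pure, mul_comm]

lemma M1_bind (p : PMF ℕ) (f : ℕ → PMF ℕ) : M1 (p.bind f) = ∑' a, p a * M1 (f a) :=
  tsum_pmf_bind p f _

lemma M2_bind (p : PMF ℕ) (f : ℕ → PMF ℕ) : M2 (p.bind f) = ∑' a, p a * M2 (f a) :=
  tsum_pmf_bind p f _

lemma M1_convPow (q : PMF ℕ) (k : ℕ) : M1 (convPow q k) = k * M1 q := by
  induction k with
  | zero =>
    simp only [Nat.cast_zero, zero_mul]
    show ∑' j : ℕ, (j : ℝ≥0∞) * (PMF.pure 0) j = 0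
    rw [tsum_pmf_pure]; simp
  | succ k ih =>
    show M1 ((convPow q k).bind fun s => q.map fun x => x + s) = _
    rw [M1_bind]
    have hmap : ∀ s : ℕ, M1 (q.map fun x => x + s) = M1 q + s := by
      intro s
      show ∑' b : ℕ, (b : ℝ≥0∞) * (q.map fun x => x + s) b = _
      rw [tsum_pmf_map]
      simp only [Nat.cast_add]
      calc ∑' a : ℕ, ((a : ℝ≥0∞) + s) * q a
          = ∑' a : ℕ, ((a : ℝ≥0∞) * q a + s * q a) := tsum_congr fun a => by ring
        _ = M1 q + (s : ℝ≥0∞) * ∑' a, q a := by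
            rw [ENNReal.tsum_add, ENNReal.tsum_mul_left]; rfl
        _ = M1 q + s := by rw [q.tsum_coe, mul_one]
    simp only [hmap]
    calc ∑' a : ℕ, (convPow q k) a * (M1 q + a)
        = ∑' a : ℕ, ((convPow q k) a * M1 q + (a : ℝ≥0∞) * (convPow q k) a) :=
          tsum_congr fun a => by ring
      _ = (∑' a, (convPow q k) a) * M1 q + M1 (convPow q k) := by
          rw [ENNReal.tsum_add, ENNReal.tsum_mul_right]; rfl
      _ = 1 * M1 q + (k : ℝ≥0∞) * M1 q := by rw [(convPow q k).tsum_coe, ih]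
      _ = ((k + 1 : ℕ) : ℝ≥0∞) * M1 q := by push_cast; ring

lemma natfac_add (x s : ℕ) : (x+s)*((x+s)-1) = x*(x-1) + s*(s-1) + 2*(x*s) := by
  cases x with
  | zero => simp
  | succ a =>
    cases s with
    | zero => simp
    | succ b =>
      simp only [Nat.add_succ, Nat.succ_sub_one]
      simp only [Nat.succ_eq_add_one]
      ring

lemma natfac_succ (k : ℕ) : (k+1)*((k+1)-1) = k*(k-1) + 2*k := by
  cases k with
  | zero => simp
  | succ a =>
    simp only [Nat.add_succ, Nat.succ_sub_one]
    simp only [Nat.succ_eq_add_one]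
    ring

lemma M2_convPow (q : PMF ℕ) (k : ℕ) :
    M2 (convPow q k) = k * M2 q + ((k * (k-1) : ℕ) : ℝ≥0∞) * (M1 q)^2 := by
  induction k with
  | zero =>
    have : ∑' j : ℕ, ((j * (j-1) : ℕ) : ℝ≥0∞) * (PMF.pure 0) j = 0 := by
      rw [tsum_pmf_pure]; simp
    rw [show M2 (convPow q 0) = ∑' j : ℕ, ((j * (j-1) : ℕ) : ℝ≥0∞) * (PMF.pure 0) j from rfl,
      this]
    simp
  | succ k ih =>
    show M2 ((convPow q k).bind fun s => q.map fun x => x + s) = _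
    rw [M2_bind]
    have hmap : ∀ s : ℕ, M2 (q.map fun x => x + s) =
        M2 q + ((s * (s-1) : ℕ) : ℝ≥0∞) + 2 * s * M1 q := by
      intro s
      show ∑' b : ℕ, ((b * (b-1) : ℕ) : ℝ≥0∞) * (q.map fun x => x + s) b = _
      rw [tsum_pmf_map]
      calc ∑' a : ℕ, (((a + s) * ((a + s) - 1) : ℕ) : ℝ≥0∞) * q a
          = ∑' a : ℕ, (((a * (a-1) : ℕ) : ℝ≥0∞) * q a
              + (((s * (s-1) : ℕ) : ℝ≥0∞) * q a + 2 * s * ((a : ℝ≥0∞) * q a))) := by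
            refine tsum_congr fun a => ?_
            rw [natfac_add]
            push_cast
            ring
        _ = M2 q + (((s * (s-1) : ℕ) : ℝ≥0∞) * ∑' a, q a + 2 * s * M1 q) := by
            rw [ENNReal.tsum_add, ENNReal.tsum_add, ENNReal.tsum_mul_left,
              ENNReal.tsum_mul_left]; rfl
        _ = M2 q + ((s * (s-1) : ℕ) : ℝ≥0∞) + 2 * s * M1 q := by
            rw [q.tsum_coe, mul_one, add_assoc]
    simp only [hmap]
    calc ∑' a : ℕ, (convPow q k) a *
          (M2 q + ((a * (a-1) : ℕ) : ℝ≥0∞) + 2 * a * M1 q)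
        = ∑' a : ℕ, ((convPow q k) a * M2 q
            + (((a * (a-1) : ℕ) : ℝ≥0∞) * (convPow q k) a
              + 2 * M1 q * ((a : ℝ≥0∞) * (convPow q k) a))) :=
          tsum_congr fun a => by ring
      _ = (∑' a, (convPow q k) a) * M2 q + (M2 (convPow q k) + 2 * M1 q * M1 (convPow q k)) := by
          rw [ENNReal.tsum_add, ENNReal.tsum_add, ENNReal.tsum_mul_right,
            ENNReal.tsum_mul_left]; rfl
      _ = 1 * M2 q + ((k * M2 q + ((k * (k-1) : ℕ) : ℝ≥0∞) * (M1 q)^2)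
            + 2 * M1 q * ((k : ℝ≥0∞) * M1 q)) := by
          rw [(convPow q k).tsum_coe, ih, M1_convPow]
      _ = ((k + 1 : ℕ) : ℝ≥0∞) * M2 q + (((k+1) * ((k+1)-1) : ℕ) : ℝ≥0∞) * (M1 q)^2 := by
          rw [natfac_succ]
          push_cast
          ring





lemma gfac_nonneg (j : ℕ) : 0 ≤ (j : ℝ) * ((j : ℝ) - 1) := by
  cases j with
  | zero => simp
  | succ a => push_cast; nlinarith [Nat.cast_nonneg (α := ℝ) a]

lemma cast_fac (j : ℕ) : ((j * (j - 1) : ℕ) : ℝ) = (j : ℝ) * ((j : ℝ) - 1) := by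
  cases j with
  | zero => simp
  | succ a => simp only [Nat.succ_sub_one]; push_cast; ring

lemma M_ofReal (p : PMF ℕ) (g : ℕ → ℝ) (hg : ∀ j, 0 ≤ g j)
    (h : Summable fun j => g j * (p j).toReal) :
    ∑' j : ℕ, ENNReal.ofReal (g j) * p j = ENNReal.ofReal (∑' j, g j * (p j).toReal) := by
  rw [ENNReal.ofReal_tsum_of_nonneg (fun j => mul_nonneg (hg j) ENNReal.toReal_nonneg) h]
  refine tsum_congr fun j => ?_
  rw [ENNReal.ofReal_mul (hg j), ENNReal.ofReal_toReal (p.apply_ne_top j)]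

lemma M1_eq_ofReal (p : PMF ℕ) (h : Summable fun j : ℕ => (j : ℝ) * (p j).toReal) :
    M1 p = ENNReal.ofReal (pmfMean p) := by
  rw [pmfMean, ← M_ofReal p _ (fun j => Nat.cast_nonneg j) h]
  exact tsum_congr fun j => by rw [ENNReal.ofReal_natCast]

lemma M2_eq_ofReal (p : PMF ℕ)
    (h : Summable fun j : ℕ => (j : ℝ) * ((j : ℝ) - 1) * (p j).toReal) :
    M2 p = ENNReal.ofReal (∑' j : ℕ, (j : ℝ) * ((j : ℝ) - 1) * (p j).toReal) := by
  rw [← M_ofReal p _ gfac_nonneg h]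
  refine tsum_congr fun j => ?_
  rw [← cast_fac, ENNReal.ofReal_natCast]

lemma tsum_real_eq_toReal_M2 (p : PMF ℕ) :
    (∑' k : ℕ, (k : ℝ) * ((k : ℝ) - 1) * (p k).toReal) = (M2 p).toReal := by
  rw [M2, ENNReal.tsum_toReal_eq
    (fun k => ENNReal.mul_ne_top (ENNReal.natCast_ne_top _) (p.apply_ne_top k))]
  refine tsum_congr fun k => ?_
  rw [ENNReal.toReal_mul, ENNReal.toReal_natCast, cast_fac]

lemma M1_bpre_succ (env : ℕ → PMF ℕ) (z n : ℕ) :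
    M1 (bpre env z (n + 1)) = M1 (env n) * M1 (bpre env z n) := by
  show M1 ((bpre env z n).bind fun k => convPow (env n) k) = _
  rw [M1_bind]
  simp only [M1_convPow]
  calc ∑' a : ℕ, (bpre env z n) a * ((a : ℝ≥0∞) * M1 (env n))
      = ∑' a : ℕ, M1 (env n) * ((a : ℝ≥0∞) * (bpre env z n) a) := tsum_congr fun a => by ring
    _ = M1 (env n) * M1 (bpre env z n) := by rw [ENNReal.tsum_mul_left]; rfl

lemma M2_bpre_succ (env : ℕ → PMF ℕ) (z n : ℕ) :
    M2 (bpre env z (n + 1)) =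
      M2 (env n) * M1 (bpre env z n) + (M1 (env n))^2 * M2 (bpre env z n) := by
  show M2 ((bpre env z n).bind fun k => convPow (env n) k) = _
  rw [M2_bind]
  simp only [M2_convPow]
  calc ∑' a : ℕ, (bpre env z n) a *
        ((a : ℝ≥0∞) * M2 (env n) + ((a * (a - 1) : ℕ) : ℝ≥0∞) * (M1 (env n))^2)
      = ∑' a : ℕ, (M2 (env n) * ((a : ℝ≥0∞) * (bpre env z n) a)
          + (M1 (env n))^2 * (((a * (a - 1) : ℕ) : ℝ≥0∞) * (bpre env z n) a)) :=
        tsum_congr fun a => by ring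
    _ = M2 (env n) * M1 (bpre env z n) + (M1 (env n))^2 * M2 (bpre env z n) := by
        rw [ENNReal.tsum_add, ENNReal.tsum_mul_left, ENNReal.tsum_mul_left]; rfl

/-- If the second factorial moments of the offspring distributions satisfy
`f_i''(1) ≤ d (f_i'(1) + f_i'(1)²)` for all `i`, then conditionally on the
environment, `E[Z_n(Z_n - 1) | env, Z_0 = 1] = f_{0,n}''(1) ≤ 2d (n+1) e^{S_n} e^{S_n - L_n}`. -/
theorem bpre_factorial_moment_bound (env : ℕ → PMF ℕ) (d : ℝ) (hd : 0 < d)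
    (hm : ∀ i, Summable (fun j : ℕ => (j : ℝ) * ((env i) j).toReal))
    (hmpos : ∀ i, 0 < pmfMean (env i))
    (hM : ∀ i, Summable (fun j : ℕ => (j : ℝ) * ((j : ℝ) - 1) * ((env i) j).toReal))
    (hfm : ∀ i, (∑' j : ℕ, (j : ℝ) * ((j : ℝ) - 1) * ((env i) j).toReal) ≤
      d * (pmfMean (env i) + pmfMean (env i) ^ 2))
    (n : ℕ) :
    (∑' k : ℕ, (k : ℝ) * ((k : ℝ) - 1) * ((bpre env 1 n) k).toReal) ≤
      2 * d * (n + 1) * Real.exp (Swalk env n) * Real.exp (Swalk env n - Lmin env n) := by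
  have hSsucc : ∀ k : ℕ, Swalk env (k + 1) = Swalk env k + Real.log (pmfMean (env k)) :=
    fun k => Finset.sum_range_succ _ k
  have hEsucc : ∀ k : ℕ, Real.exp (Swalk env (k + 1))
      = pmfMean (env k) * Real.exp (Swalk env k) := by
    intro k; rw [hSsucc, Real.exp_add, Real.exp_log (hmpos k)]; ring
  have hLmono : ∀ k : ℕ, Lmin env (k + 1) ≤ Lmin env k := by
    intro k
    refine Finset.le_inf' _ _ fun b hb => Finset.inf'_le _ ?_
    rw [Finset.mem_range] at hb ⊢; omega
  have hLS : ∀ j k : ℕ, j ≤ k → Lmin env k ≤ Swalk env j := fun j k hjk =>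
    Finset.inf'_le _ (Finset.mem_range.mpr (Nat.lt_succ_of_le hjk))
  have key : ∀ m : ℕ, M1 (bpre env 1 m) = ENNReal.ofReal (Real.exp (Swalk env m)) ∧
      M2 (bpre env 1 m) ≤ ENNReal.ofReal
        (2 * d * ((m : ℝ) + 1) * Real.exp (Swalk env m)
          * Real.exp (Swalk env m - Lmin env m)) := by
    intro m
    induction m with
    | zero =>
      constructor
      · have h1 : M1 (bpre env 1 0) = 1 := by
          show ∑' j : ℕ, (j : ℝ≥0∞) * (PMF.pure 1) j = 1
          rw [tsum_pmf_pure]; simp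
        have h2 : Swalk env 0 = 0 := by simp [Swalk]
        rw [h1, h2, Real.exp_zero, ENNReal.ofReal_one]
      · have h1 : M2 (bpre env 1 0) = 0 := by
          show ∑' j : ℕ, ((j * (j - 1) : ℕ) : ℝ≥0∞) * (PMF.pure 1) j = 0
          rw [tsum_pmf_pure]; simp
        rw [h1]; exact zero_le
    | succ m ih =>
      obtain ⟨ih1, ih2⟩ := ih
      have hμ := hmpos m
      have hA : (0:ℝ) < Real.exp (Swalk env m) := Real.exp_pos _
      have hμE : M1 (env m) = ENNReal.ofReal (pmfMean (env m)) := M1_eq_ofReal _ (hm m)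
      have hμμ : (0:ℝ) ≤ pmfMean (env m) + pmfMean (env m) ^ 2 := by nlinarith [hμ.le]
      have hB : (0:ℝ) ≤ 2 * d * ((m : ℝ) + 1) * Real.exp (Swalk env m)
          * Real.exp (Swalk env m - Lmin env m) := by
        have : (0:ℝ) ≤ 2 * d * ((m : ℝ) + 1) :=
          mul_nonneg (by linarith) (by positivity)
        exact mul_nonneg (mul_nonneg this hA.le) (Real.exp_pos _).le
      constructor
      · rw [M1_bpre_succ, hμE, ih1, ← ENNReal.ofReal_mul hμ.le, ← hEsucc m]
      · rw [M2_bpre_succ]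
        have hσ : M2 (env m) ≤ ENNReal.ofReal (d * (pmfMean (env m) + pmfMean (env m) ^ 2)) := by
          rw [M2_eq_ofReal _ (hM m)]
          exact ENNReal.ofReal_le_ofReal (hfm m)
        have step1 : M2 (env m) * M1 (bpre env 1 m) + (M1 (env m))^2 * M2 (bpre env 1 m)
            ≤ ENNReal.ofReal
              (d * (pmfMean (env m) + pmfMean (env m) ^ 2) * Real.exp (Swalk env m)
                + pmfMean (env m) ^ 2 * (2 * d * ((m : ℝ) + 1) * Real.exp (Swalk env m)
                  * Real.exp (Swalk env m - Lmin env m))) := by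
          rw [ENNReal.ofReal_add (mul_nonneg (mul_nonneg hd.le hμμ) hA.le)
              (mul_nonneg (sq_nonneg _) hB),
            ENNReal.ofReal_mul (mul_nonneg hd.le hμμ),
            ENNReal.ofReal_mul (sq_nonneg (pmfMean (env m)))]
          refine add_le_add (mul_le_mul' hσ (le_of_eq ih1)) (mul_le_mul' ?_ ih2)
          rw [hμE, ← ENNReal.ofReal_pow hμ.le]
        refine step1.trans (ENNReal.ofReal_le_ofReal ?_)
        push_cast
        rw [hEsucc m]
        -- exponential comparison facts
        have hT : Real.exp (Swalk env m - Lmin env m)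
            ≤ Real.exp (Swalk env m - Lmin env (m + 1)) :=
          Real.exp_le_exp.mpr (by linarith [hLmono m])
        have hE1 : (1:ℝ) ≤ Real.exp (Swalk env (m + 1) - Lmin env (m + 1)) := by
          rw [← Real.exp_zero]
          exact Real.exp_le_exp.mpr (by linarith [hLS (m + 1) (m + 1) le_rfl])
        have hE2 : pmfMean (env m) ≤ Real.exp (Swalk env (m + 1) - Lmin env (m + 1)) := by
          have h := hLS m (m + 1) (Nat.le_succ m)
          have : Real.log (pmfMean (env m)) ≤ Swalk env (m + 1) - Lmin env (m + 1) := by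
            rw [hSsucc]; linarith
          calc pmfMean (env m) = Real.exp (Real.log (pmfMean (env m))) :=
                (Real.exp_log hμ).symm
            _ ≤ _ := Real.exp_le_exp.mpr this
        have hE3 : pmfMean (env m) * Real.exp (Swalk env m - Lmin env m)
            ≤ Real.exp (Swalk env (m + 1) - Lmin env (m + 1)) := by
          have heq : pmfMean (env m) * Real.exp (Swalk env m - Lmin env (m + 1))
              = Real.exp (Swalk env (m + 1) - Lmin env (m + 1)) := by
            rw [hSsucc, show Swalk env m + Real.log (pmfMean (env m)) - Lmin env (m + 1)
                = (Swalk env m - Lmin env (m + 1)) + Real.log (pmfMean (env m)) by ring,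
              Real.exp_add, Real.exp_log hμ]
            ring
          calc pmfMean (env m) * Real.exp (Swalk env m - Lmin env m)
              ≤ pmfMean (env m) * Real.exp (Swalk env m - Lmin env (m + 1)) :=
                mul_le_mul_of_nonneg_left hT hμ.le
            _ = _ := heq
        have hc1 : (0:ℝ) ≤ d * pmfMean (env m) * Real.exp (Swalk env m) :=
          mul_nonneg (mul_nonneg hd.le hμ.le) hA.le
        have hc2 : (0:ℝ) ≤ 2 * d * ((m : ℝ) + 1) * pmfMean (env m) * Real.exp (Swalk env m) :=
          mul_nonneg (mul_nonneg (mul_nonneg (by linarith) (by positivity)) hμ.le) hA.le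
        nlinarith [mul_le_mul_of_nonneg_left hE1 hc1, mul_le_mul_of_nonneg_left hE2 hc1,
          mul_le_mul_of_nonneg_left hE3 hc2, hμ.le, hA.le, hd.le,
          Nat.cast_nonneg (α := ℝ) m]
  have hB : (0:ℝ) ≤ 2 * d * ((n : ℝ) + 1) * Real.exp (Swalk env n)
      * Real.exp (Swalk env n - Lmin env n) := by
    have : (0:ℝ) ≤ 2 * d * ((n : ℝ) + 1) := mul_nonneg (by linarith) (by positivity)
    exact mul_nonneg (mul_nonneg this (Real.exp_pos _).le) (Real.exp_pos _).le
  rw [tsum_real_eq_toReal_M2]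
  calc (M2 (bpre env 1 n)).toReal
      ≤ (ENNReal.ofReal (2 * d * ((n : ℝ) + 1) * Real.exp (Swalk env n)
          * Real.exp (Swalk env n - Lmin env n))).toReal :=
        ENNReal.toReal_mono ENNReal.ofReal_ne_top (key n).2
    _ = _ := ENNReal.toReal_ofReal hB
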